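/- Let m ≥ r and let e_I = e_{i_1}···e_{i_s} be a product of distinct generators of the Clifford algebra Cl_m (generators satisfying e_j e_k + e_k e_j = -2δ_{jk}). Then e_I commutes with every element e_i e_j with 1 ≤ i < j ≤ r if and only if I ⊆ {r+1,...,m} or {1,...,r} ⊆ I. -/

import Mathlib

/-- The negative definite quadratic form on `ℝⁿ`. -/
noncomputable def Qneg (n : ℕ) : QuadraticForm ℝ (Fin n → ℝ) :=
  QuadraticMap.weightedSumSquares ℝ (fun _ : Fin n => (-1 : ℝ))

/-- The Clifford algebra `Cl_n` with `e_j e_k + e_k e_j = -2 δ_{jk}`. -/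
noncomputable abbrev Cl (n : ℕ) := CliffordAlgebra (Qneg n)

/-- The standard generators `e_i` of `Cl_n`. -/
noncomputable def gen (n : ℕ) (i : Fin n) : Cl n :=
  CliffordAlgebra.ι (Qneg n) (Pi.single i 1)

/-- For an index set `I = {i₁ < ⋯ < i_s}`, the basis element `e_I = e_{i₁} ⋯ e_{i_s}`. -/
noncomputable def eProd (n : ℕ) (I : Finset (Fin n)) : Cl n :=
  ((I.sort (· ≤ ·)).map (gen n)).prod


lemma Qneg_single (m : ℕ) (i : Fin m) : Qneg m (Pi.single i 1) = -1 := by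
  simp [Qneg, QuadraticMap.weightedSumSquares_apply, Pi.single_apply]

lemma Qneg_single_add (m : ℕ) {i j : Fin m} (h : i ≠ j) :
    Qneg m (Pi.single i 1 + Pi.single j 1) = -2 := by
  rw [Qneg, QuadraticMap.weightedSumSquares_apply]
  have : ∀ k : Fin m, (-1 : ℝ) • ((Pi.single i 1 + Pi.single j 1 : Fin m → ℝ) k *
      (Pi.single i 1 + Pi.single j 1 : Fin m → ℝ) k) =
      (-1 : ℝ) • ((Pi.single i 1 : Fin m → ℝ) k * (Pi.single i 1 : Fin m → ℝ) k) +
      (-1 : ℝ) • ((Pi.single j 1 : Fin m → ℝ) k * (Pi.single j 1 : Fin m → ℝ) k) := by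
    intro k
    rcases eq_or_ne k i with rfl | hi
    · simp [Pi.single_apply, h.symm]
    · rcases eq_or_ne k j with rfl | hj
      · simp [Pi.single_apply, h]
      · simp [Pi.single_apply, Ne.symm hi, Ne.symm hj, hi, hj]
  rw [Finset.sum_congr rfl (fun k _ => this k), Finset.sum_add_distrib]
  simp [Pi.single_apply]
  norm_num

lemma gen_sq (m : ℕ) (i : Fin m) : gen m i * gen m i = -1 := by
  rw [gen, CliffordAlgebra.ι_sq_scalar, Qneg_single, map_neg, map_one]

lemma gen_anticomm (m : ℕ) {i j : Fin m} (h : i ≠ j) :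
    gen m i * gen m j = -(gen m j * gen m i) := by
  have H := CliffordAlgebra.ι_mul_ι_add_swap (Q := Qneg m) (Pi.single i 1) (Pi.single j 1)
  have hp : QuadraticMap.polar (⇑(Qneg m)) (Pi.single i 1) (Pi.single j 1) = 0 := by
    rw [QuadraticMap.polar, Qneg_single_add m h, Qneg_single, Qneg_single]; ring
  rw [hp, map_zero] at H
  rw [gen, gen]
  exact eq_neg_of_add_eq_zero_left H

lemma gen_mul_list (m : ℕ) (i : Fin m) :
    ∀ l : List (Fin m),
      gen m i * ((l.map (gen m)).prod) =
        ((-1 : ℝ) ^ (l.countP (fun a => decide (a ≠ i)))) • (((l.map (gen m)).prod) * gen m i)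
  | [] => by simp
  | a :: t => by
    have IH := gen_mul_list m i t
    set P := (t.map (gen m)).prod with hP
    set c := t.countP (fun a => decide (a ≠ i)) with hc
    rcases eq_or_ne a i with rfl | ha
    · have hcc : (a :: t).countP (fun x => decide (x ≠ a)) = c := by
        simp [List.countP_cons, hc]
      rw [List.map_cons, List.prod_cons, hcc, ← hP]
      conv_rhs => rw [mul_assoc, ← mul_smul_comm, ← IH]
    · have hcc : (a :: t).countP (fun x => decide (x ≠ i)) = c + 1 := by
        simp [List.countP_cons, hc, ha]
      rw [List.map_cons, List.prod_cons, hcc, ← hP]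
      calc gen m i * (gen m a * P) = (gen m i * gen m a) * P := by rw [mul_assoc]
        _ = -(gen m a * gen m i) * P := by rw [gen_anticomm m ha.symm]
        _ = -(gen m a * (gen m i * P)) := by rw [neg_mul, mul_assoc]
        _ = -(gen m a * ((-1:ℝ)^c • (P * gen m i))) := by rw [IH]
        _ = ((-1:ℝ)^(c+1)) • (gen m a * P * gen m i) := by
            rw [mul_smul_comm, ← neg_smul, pow_succ, mul_comm ((-1:ℝ)^c), neg_one_mul,
              mul_assoc]

lemma countP_sort (m : ℕ) (I : Finset (Fin m)) (i : Fin m) :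
    (I.sort (· ≤ ·)).countP (fun a => decide (a ≠ i)) = (I.erase i).card := by
  rw [(Finset.sort_perm_toList I _).countP_eq]
  have h1 : I.toList.countP (fun a => decide (a ≠ i)) = Multiset.countP (fun a => a ≠ i) I.val := by
    rw [← Multiset.coe_countP, Finset.coe_toList]
  rw [h1, Multiset.countP_eq_card_filter, ← Finset.filter_val, Finset.filter_ne', Finset.card_def]

lemma gen_mul_eProd (m : ℕ) (i : Fin m) (I : Finset (Fin m)) :
    gen m i * eProd m I = ((-1:ℝ) ^ (I.erase i).card) • (eProd m I * gen m i) := by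
  rw [eProd, gen_mul_list, countP_sort]

lemma isUnit_gen (m : ℕ) (i : Fin m) : IsUnit (gen m i) :=
  ⟨⟨gen m i, -(gen m i), by rw [mul_neg, gen_sq, neg_neg],
    by rw [neg_mul, gen_sq, neg_neg]⟩, rfl⟩

lemma isUnit_eProd (m : ℕ) (I : Finset (Fin m)) : IsUnit (eProd m I) := by
  refine List.prod_isUnit ?_
  intro a ha
  obtain ⟨j, _, rfl⟩ := List.mem_map.mp ha
  exact isUnit_gen m j

lemma sign_mul_sign (m : ℕ) (I : Finset (Fin m)) {i j : Fin m} :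
    (-1:ℝ) ^ (I.erase i).card * (-1:ℝ) ^ (I.erase j).card =
      if (i ∈ I ↔ j ∈ I) then 1 else -1 := by
  rw [← pow_add]
  by_cases hi : i ∈ I <;> by_cases hj : j ∈ I
  · rw [if_pos (by tauto), Finset.card_erase_of_mem hi, Finset.card_erase_of_mem hj]
    exact Even.neg_one_pow ⟨I.card - 1, rfl⟩
  · rw [if_neg (by tauto), Finset.card_erase_of_mem hi, Finset.erase_eq_of_notMem hj]
    have hIc : 1 ≤ I.card := Finset.card_pos.mpr ⟨i, hi⟩
    exact Odd.neg_one_pow ⟨I.card - 1, by omega⟩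
  · rw [if_neg (by tauto), Finset.erase_eq_of_notMem hi, Finset.card_erase_of_mem hj]
    have hIc : 1 ≤ I.card := Finset.card_pos.mpr ⟨j, hj⟩
    exact Odd.neg_one_pow ⟨I.card - 1, by omega⟩
  · rw [if_pos (by tauto), Finset.erase_eq_of_notMem hi, Finset.erase_eq_of_notMem hj]
    exact Even.neg_one_pow ⟨I.card, rfl⟩

lemma commute_iff (m : ℕ) (I : Finset (Fin m)) {i j : Fin m} (hij : i ≠ j) :
    Commute (eProd m I) (gen m i * gen m j) ↔ (i ∈ I ↔ j ∈ I) := by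
  set E := eProd m I
  set si := (-1:ℝ) ^ (I.erase i).card
  set sj := (-1:ℝ) ^ (I.erase j).card
  have key : (gen m i * gen m j) * E = (si * sj) • (E * (gen m i * gen m j)) := by
    calc (gen m i * gen m j) * E = gen m i * (gen m j * E) := by rw [mul_assoc]
      _ = gen m i * (sj • (E * gen m j)) := by rw [gen_mul_eProd]
      _ = sj • (gen m i * E * gen m j) := by rw [mul_smul_comm, mul_assoc]
      _ = sj • ((si • (E * gen m i)) * gen m j) := by rw [gen_mul_eProd]
      _ = (si * sj) • (E * (gen m i * gen m j)) := by
          rw [smul_mul_assoc, smul_smul, mul_comm sj si, mul_assoc]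
  have hne : E * (gen m i * gen m j) ≠ 0 :=
    ((isUnit_eProd m I).mul ((isUnit_gen m i).mul (isUnit_gen m j))).ne_zero
  rw [Commute, SemiconjBy, key]
  by_cases h : (i ∈ I ↔ j ∈ I)
  · simp [si, sj, sign_mul_sign m I, h]
  · rw [sign_mul_sign m I, if_neg h]
    constructor
    · intro he
      exfalso
      apply hne
      have : (2:ℝ) • (E * (gen m i * gen m j)) = 0 := by
        rw [two_smul]
        nth_rewrite 1 [he]
        simp
      simpa using this
    · intro hh; exact absurd hh h


/-- Lemma 2.1: `e_I` commutes with every `e_i e_j` (`i < j` in the first `r` indices)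
iff `I ⊆ {r+1,…,m}` or `{1,…,r} ⊆ I`. -/
theorem stmt0 (r m : ℕ) (hrm : r ≤ m) (I : Finset (Fin m)) :
    (∀ i j : Fin m, (i : ℕ) < r → (j : ℕ) < r → i < j →
        Commute (eProd m I) (gen m i * gen m j)) ↔
      ((∀ i ∈ I, r ≤ (i : ℕ)) ∨ (∀ i : Fin m, (i : ℕ) < r → i ∈ I)) := by
  constructor
  · intro h
    by_contra hc
    push_neg at hc
    obtain ⟨⟨a, haI, har⟩, b, hbr, hbI⟩ := hc
    have hab : a ≠ b := fun he => hbI (he ▸ haI)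
    rcases hab.lt_or_gt with hlt | hlt
    · exact hbI (((commute_iff m I (ne_of_lt hlt)).mp
        (h a b har hbr hlt)).mp haI)
    · exact hbI (((commute_iff m I (ne_of_lt hlt)).mp
        (h b a hbr har hlt)).mpr haI)
  · rintro (h | h) i j hi hj hij
    · refine (commute_iff m I (ne_of_lt hij)).mpr ?_
      constructor
      · intro hiI; exact absurd (h i hiI) (not_le.mpr hi)
      · intro hjI; exact absurd (h j hjI) (not_le.mpr hj)
    · exact (commute_iff m I (ne_of_lt hij)).mpr (by simp [h i hi, h j hj])
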